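/- Let H be a minor of G with branch sets (V_h), and let T' be a tangle of order θ in H. Define T as the set of all separations (A,B) of G of order < θ whose induced separation (A',B') in H (with A' = {h : V_h∩A ≠ ∅}, B' = {h : V_h∩B ≠ ∅}) lies in T'. Then T is a tangle of order θ in G. -/

import Mathlib

/-- `(A,B)` is a separation of `G`. -/
def IsSeparation {V : Type*} [Fintype V] [DecidableEq V]
    (G : SimpleGraph V) (A B : Finset V) : Prop :=
  A ∪ B = Finset.univ ∧
    ∀ a ∈ A, a ∉ B → ∀ b ∈ B, b ∉ A → ¬ G.Adj a b

/-- `T` is a tangle of order `θ` in `G`: it consists of separations of order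
`< θ`; every separation of order `< θ` has exactly one orientation in `T`; and
no three small sides of members of `T` cover the vertex set. -/
def IsTangle {V : Type*} [Fintype V] [DecidableEq V]
    (G : SimpleGraph V) (θ : ℕ) (T : Finset V → Finset V → Prop) : Prop :=
  (∀ A B, T A B → IsSeparation G A B ∧ (A ∩ B).card < θ) ∧
  (∀ A B, IsSeparation G A B → (A ∩ B).card < θ → Xor' (T A B) (T B A)) ∧
  (∀ A₁ B₁ A₂ B₂ A₃ B₃, T A₁ B₁ → T A₂ B₂ → T A₃ B₃ → A₁ ∪ A₂ ∪ A₃ ≠ Finset.univ)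

/-- Minor model of `H` in `G`. -/
def IsMinorModel {V W : Type*} [Fintype V] [DecidableEq V]
    (G : SimpleGraph V) (H : SimpleGraph W) (M : W → Finset V) : Prop :=
  (∀ h, (M h).Nonempty) ∧
  (∀ h, (G.induce (M h : Set V)).Connected) ∧
  (∀ h h', h ≠ h' → Disjoint (M h) (M h')) ∧
  (∀ h h', H.Adj h h' → ∃ a ∈ M h, ∃ b ∈ M h', G.Adj a b)

lemma IsSeparation.symm' {V : Type*} [Fintype V] [DecidableEq V]
    {G : SimpleGraph V} {A B : Finset V} (h : IsSeparation G A B) :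
    IsSeparation G B A :=
  ⟨by rw [Finset.union_comm]; exact h.1,
   fun b hb hbA a ha haB hadj => h.2 a ha haB b hb hbA hadj.symm⟩

lemma cross_lemma {V : Type*} [Fintype V] [DecidableEq V]
    (G : SimpleGraph V) (A B : Finset V) (hsep : IsSeparation G A B)
    {S : Set V} :
    ∀ {a b : S} (_ : (G.induce S).Walk a b), (a : V) ∈ A → (b : V) ∈ B →
      ∃ x : S, (x : V) ∈ A ∧ (x : V) ∈ B := by
  intro a b w
  induction w with
  | nil => exact fun ha hb => ⟨_, ha, hb⟩
  | @cons u v r hadj p ih =>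
    intro ha hb
    by_cases hvA : (v : V) ∈ A
    · exact ih hvA hb
    · have hvB : (v : V) ∈ B := by
        have := Finset.mem_univ (v : V)
        rw [← hsep.1, Finset.mem_union] at this
        tauto
      by_cases huB : (u : V) ∈ B
      · exact ⟨u, ha, huB⟩
      · exact absurd hadj (hsep.2 u ha huB v hvB hvA)

lemma branch_meets {V W : Type*} [Fintype V] [DecidableEq V]
    {G : SimpleGraph V} {H : SimpleGraph W} {M : W → Finset V}
    (hM : IsMinorModel G H M) {A B : Finset V} (hsep : IsSeparation G A B)
    (h : W) (hA : (M h ∩ A).Nonempty) (hB : (M h ∩ B).Nonempty) :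
    ∃ x ∈ M h, x ∈ A ∧ x ∈ B := by
  obtain ⟨a, ha⟩ := hA
  obtain ⟨haM, haA⟩ := Finset.mem_inter.mp ha
  obtain ⟨b, hb⟩ := hB
  obtain ⟨hbM, hbB⟩ := Finset.mem_inter.mp hb
  have hreach := (hM.2.1 h).preconnected ⟨a, haM⟩ ⟨b, hbM⟩
  obtain ⟨w⟩ := hreach
  obtain ⟨x, hxA, hxB⟩ := cross_lemma G A B hsep w haA hbB
  exact ⟨x, x.2, hxA, hxB⟩

lemma order_le {V W : Type*} [Fintype V] [DecidableEq V]
    [Fintype W] [DecidableEq W]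
    {G : SimpleGraph V} {H : SimpleGraph W} {M : W → Finset V}
    (hM : IsMinorModel G H M) {A B : Finset V} (hsep : IsSeparation G A B) :
    ((Finset.univ.filter fun h => (M h ∩ A).Nonempty) ∩
     (Finset.univ.filter fun h => (M h ∩ B).Nonempty)).card ≤ (A ∩ B).card := by
  classical
  set S := (Finset.univ.filter fun h => (M h ∩ A).Nonempty) ∩
     (Finset.univ.filter fun h => (M h ∩ B).Nonempty) with hS
  rcases S.eq_empty_or_nonempty with he | ⟨h₀, hh₀⟩
  · simp [he]
  · have hw : ∀ h ∈ S, ∃ x ∈ M h, x ∈ A ∧ x ∈ B := by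
      intro h hh
      rw [hS, Finset.mem_inter, Finset.mem_filter, Finset.mem_filter] at hh
      exact branch_meets hM hsep h hh.1.2 hh.2.2
    have : Nonempty V := by
      obtain ⟨x, hx, -⟩ := hw h₀ hh₀; exact ⟨x⟩
    set f : W → V := fun h =>
      if hc : ∃ x ∈ M h, x ∈ A ∧ x ∈ B then hc.choose else Classical.arbitrary V
      with hf
    apply Finset.card_le_card_of_injOn f
    · intro h hh
      have hc := hw h hh
      simp only [hf, dif_pos hc]
      exact Finset.mem_inter.mpr ⟨hc.choose_spec.2.1, hc.choose_spec.2.2⟩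
    · intro h₁ h₁S h₂ h₂S hfeq
      by_contra hne
      have hc₁ := hw h₁ h₁S
      have hc₂ := hw h₂ h₂S
      simp only [hf, dif_pos hc₁, dif_pos hc₂] at hfeq
      have := hM.2.2.1 h₁ h₂ hne
      exact Finset.disjoint_left.mp this hc₁.choose_spec.1
        (hfeq ▸ hc₂.choose_spec.1)

lemma induced_sep {V W : Type*} [Fintype V] [DecidableEq V]
    [Fintype W] [DecidableEq W]
    {G : SimpleGraph V} {H : SimpleGraph W} {M : W → Finset V}
    (hM : IsMinorModel G H M) {A B : Finset V} (hsep : IsSeparation G A B) :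
    IsSeparation H (Finset.univ.filter fun h => (M h ∩ A).Nonempty)
      (Finset.univ.filter fun h => (M h ∩ B).Nonempty) := by
  constructor
  · ext h
    simp only [Finset.mem_union, Finset.mem_filter, Finset.mem_univ, true_and,
      iff_true]
    obtain ⟨x, hx⟩ := hM.1 h
    have := Finset.mem_univ x
    rw [← hsep.1, Finset.mem_union] at this
    rcases this with hxA | hxB
    · exact Or.inl ⟨x, Finset.mem_inter.mpr ⟨hx, hxA⟩⟩
    · exact Or.inr ⟨x, Finset.mem_inter.mpr ⟨hx, hxB⟩⟩
  · intro h hhA hhB h' hh'B hh'A hadj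
    simp only [Finset.mem_filter, Finset.mem_univ, true_and,
      Finset.not_nonempty_iff_eq_empty] at hhA hhB hh'A hh'B
    obtain ⟨a, haM, b, hbM, hab⟩ := hM.2.2.2 h h' hadj
    -- a ∈ M h so a ∈ A \ B ; b ∈ M h' so b ∈ B \ A
    have haA : a ∈ A := by
      have := Finset.mem_univ a
      rw [← hsep.1, Finset.mem_union] at this
      rcases this with h1 | h1
      · exact h1
      · exact absurd (hhB ▸ Finset.mem_inter.mpr ⟨haM, h1⟩) (Finset.notMem_empty a)
    have haB : a ∉ B := fun hc =>
      Finset.notMem_empty a (hhB ▸ Finset.mem_inter.mpr ⟨haM, hc⟩)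
    have hbB : b ∈ B := by
      have := Finset.mem_univ b
      rw [← hsep.1, Finset.mem_union] at this
      rcases this with h1 | h1
      · exact absurd (hh'A ▸ Finset.mem_inter.mpr ⟨hbM, h1⟩) (Finset.notMem_empty b)
      · exact h1
    have hbA : b ∉ A := fun hc =>
      Finset.notMem_empty b (hh'A ▸ Finset.mem_inter.mpr ⟨hbM, hc⟩)
    exact hsep.2 a haA haB b hbB hbA hab

/-- Given a minor model of `H` in `G` and a tangle `T'` of order `θ` in `H`,
the set `T` of all separations `(A,B)` of `G` of order `< θ` whose induced
separation in `H` lies in `T'` is a tangle of order `θ` in `G`. -/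
theorem tangle_extension {V W : Type*} [Fintype V] [DecidableEq V]
    [Fintype W] [DecidableEq W]
    (G : SimpleGraph V) (H : SimpleGraph W) (M : W → Finset V)
    (hM : IsMinorModel G H M) (θ : ℕ) (T' : Finset W → Finset W → Prop)
    (hT' : IsTangle H θ T') :
    IsTangle G θ (fun A B =>
      IsSeparation G A B ∧ (A ∩ B).card < θ ∧
      T' (Finset.univ.filter fun h => (M h ∩ A).Nonempty)
         (Finset.univ.filter fun h => (M h ∩ B).Nonempty)) := by
  refine ⟨fun A B h => ⟨h.1, h.2.1⟩, ?_, ?_⟩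
  · intro A B hsep hord
    have hsep' := induced_sep hM hsep
    have hord' : ((Finset.univ.filter fun h => (M h ∩ A).Nonempty) ∩
        (Finset.univ.filter fun h => (M h ∩ B).Nonempty)).card < θ :=
      lt_of_le_of_lt (order_le hM hsep) hord
    rcases hT'.2.1 _ _ hsep' hord' with ⟨h1, h2⟩ | ⟨h1, h2⟩
    · exact Or.inl ⟨⟨hsep, hord, h1⟩, fun hc => h2 hc.2.2⟩
    · refine Or.inr ⟨⟨hsep.symm', by rwa [Finset.inter_comm], h1⟩,
        fun hc => h2 hc.2.2⟩
  · intro A₁ B₁ A₂ B₂ A₃ B₃ h1 h2 h3 hcov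
    refine hT'.2.2 _ _ _ _ _ _ h1.2.2 h2.2.2 h3.2.2 ?_
    ext h
    simp only [Finset.mem_union, Finset.mem_filter, Finset.mem_univ, true_and,
      iff_true]
    obtain ⟨x, hx⟩ := hM.1 h
    have := Finset.mem_univ x
    rw [← hcov, Finset.mem_union, Finset.mem_union] at this
    rcases this with (hxA | hxA) | hxA
    · exact Or.inl (Or.inl ⟨x, Finset.mem_inter.mpr ⟨hx, hxA⟩⟩)
    · exact Or.inl (Or.inr ⟨x, Finset.mem_inter.mpr ⟨hx, hxA⟩⟩)
    · exact Or.inr ⟨x, Finset.mem_inter.mpr ⟨hx, hxA⟩⟩
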